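/- (Corollary: vertex case.) Assume each a_{j,r,n} belongs to ℂ{z}, that Λ_m = {(m,0)} with ord_t(a_{m,0}) = 0 (so the principal part of P(∂_t,∂_z) is a_{m,0,0}(z)·∂_t^m), and the non-resonance condition a_{m,0,0}(0) ≠ 0 (the constant term of a_{m,0,0} is nonzero). Then P(∂_t,∂_z)∂_t^{−m} is a bijective ℂ-linear map of ℂ[[t,z]] onto itself whose restriction to 𝒪[[t]] is a bijection of 𝒪[[t]] onto itself. -/

import Mathlib

open PowerSeries

set_option synthInstance.maxHeartbeats 1000000
set_option maxHeartbeats 1000000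

/-- Formal differentiation `∂_z` on `ℂ[[z]]` as a `ℂ`-linear map. -/
noncomputable def dz : PowerSeries ℂ →ₗ[ℂ] PowerSeries ℂ where
  toFun u := PowerSeries.mk fun n => ((n : ℂ) + 1) * PowerSeries.coeff (R := ℂ) (n + 1) u
  map_add' u v := by
    ext n
    simp [mul_add]
  map_smul' c u := by
    ext n
    simp
    ring

/-- The order of vanishing at `0` of a formal power series in `z`. -/
noncomputable def ordz (g : PowerSeries ℂ) : ℕ := sInf {k : ℕ | PowerSeries.coeff (R := ℂ) k g ≠ 0}

/-- `ℂ[[t,z]]`, identified with formal power series in `t` with coefficients in `ℂ[[z]]`. -/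
abbrev PS2 : Type := PowerSeries (PowerSeries ℂ)

lemma coeff2_smul (c : ℂ) (u : PS2) (n : ℕ) :
    PowerSeries.coeff (R := PowerSeries ℂ) n (c • u) =
      c • PowerSeries.coeff (R := PowerSeries ℂ) n u := rfl

/-- The order in `t` of an element of `ℂ[[t,z]]`. -/
noncomputable def ordT (g : PS2) : ℕ :=
  sInf {n : ℕ | PowerSeries.coeff (R := PowerSeries ℂ) n g ≠ 0}

/-- Formal differentiation `∂_t` on `ℂ[[t,z]]`. -/
noncomputable def dt : PS2 →ₗ[ℂ] PS2 where
  toFun u := PowerSeries.mk fun n =>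
    ((n : ℂ) + 1) • PowerSeries.coeff (R := PowerSeries ℂ) (n + 1) u
  map_add' u v := by
    ext n
    simp [smul_add]
  map_smul' c u := by
    ext n
    simp [coeff2_smul, smul_smul, mul_comm]

/-- Formal differentiation `∂_z` on `ℂ[[t,z]]`, acting on each coefficient `u_n ∈ ℂ[[z]]`. -/
noncomputable def dzc : PS2 →ₗ[ℂ] PS2 where
  toFun u := PowerSeries.mk fun n => dz (PowerSeries.coeff (R := PowerSeries ℂ) n u)
  map_add' u v := by
    ext n
    simp
  map_smul' c u := by
    ext n
    simp [coeff2_smul]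

/-- The integration operator `∂_t^{−m}` on `ℂ[[t,z]]`, sending `Σ u_n t^n` to
`Σ (n!/(n+m)!)·u_n t^{n+m}`. -/
noncomputable def dtInv (m : ℕ) : PS2 →ₗ[ℂ] PS2 where
  toFun u := PowerSeries.mk fun n =>
    if m ≤ n then
      ((((n - m).factorial : ℂ)) / (n.factorial : ℂ)) • PowerSeries.coeff (R := PowerSeries ℂ) (n - m) u
    else 0
  map_add' u v := by
    ext n
    simp only [PowerSeries.coeff_mk, map_add]
    split <;> simp [smul_add]
  map_smul' c u := by
    ext n
    simp only [PowerSeries.coeff_mk, coeff2_smul, RingHom.id_apply]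
    split <;> simp [coeff2_smul, smul_smul, mul_comm]

/-- The operator `P(∂_t,∂_z)∂_t^{−m}` on `ℂ[[t,z]]`, where
`P(∂_t,∂_z) u = Σ_{(j,r)∈Λ} a_{jr}·∂_t^j ∂_z^r u`. -/
noncomputable def POp (Λ : Finset (ℕ × ℕ)) (a : ℕ × ℕ → PS2) (m : ℕ) : PS2 →ₗ[ℂ] PS2 :=
  (∑ p ∈ Λ, (LinearMap.mulLeft ℂ (a p)).comp ((dt ^ p.1).comp (dzc ^ p.2))).comp (dtInv m)

/-- The coefficient `b_{n,r} = Σ_{j : (j,r)∈Λ_m} n(n−1)⋯(n−(j−m)+1)·a_{j,r,j−m} ∈ ℂ[[z]]`,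
where `M` is the integer `m = max_{(j,r)∈Λ}(j − ord_t(a_{jr}))`. -/
noncomputable def bcoef (Λ : Finset (ℕ × ℕ)) (a : ℕ × ℕ → PS2) (M : ℤ) (n r : ℕ) :
    PowerSeries ℂ :=
  ∑ p ∈ Λ.filter (fun p => p.2 = r ∧ (p.1 : ℤ) - (ordT (a p) : ℤ) = M),
    (n.descFactorial (p.1 - M.toNat) : ℂ) •
      PowerSeries.coeff (R := PowerSeries ℂ) (p.1 - M.toNat) (a p)

/-- The operator `P̃_m(n,∂_z) v = Σ_r b_{n,r}·∂_z^r v` on `ℂ[[z]]`. -/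
noncomputable def Ptil (Λ : Finset (ℕ × ℕ)) (a : ℕ × ℕ → PS2) (M : ℤ) (n : ℕ) :
    PowerSeries ℂ →ₗ[ℂ] PowerSeries ℂ :=
  ∑ r ∈ Λ.image Prod.snd, (LinearMap.mulLeft ℂ (bcoef Λ a M n r)).comp (dz ^ r)

/-- The quantity `W(n,k) = W_{m,0}(n,k,0)`: the sum over `(j,r) ∈ Λ_m` with
`ord_z(a_{j,r,j−m}) = r` of `c_{j,r}·n(n−1)⋯(n−(j−m)+1)·k(k−1)⋯(k−r+1)`, where `c_{j,r}` is
the coefficient of `z^r` in `a_{j,r,j−m}`. -/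
noncomputable def Wnk (Λ : Finset (ℕ × ℕ)) (a : ℕ × ℕ → PS2) (M : ℤ) (n k : ℕ) : ℂ :=
  ∑ p ∈ Λ.filter (fun p => (p.1 : ℤ) - (ordT (a p) : ℤ) = M ∧
      ordz (PowerSeries.coeff (R := PowerSeries ℂ) (p.1 - M.toNat) (a p)) = p.2),
    PowerSeries.coeff (R := ℂ) p.2 (PowerSeries.coeff (R := PowerSeries ℂ) (p.1 - M.toNat) (a p))
      * (n.descFactorial (p.1 - M.toNat) : ℂ) * (k.descFactorial p.2 : ℂ)

/-- The set `ℂ[[z]]_s` of Gevrey series of order `s`: series `Σ v_k z^k` with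
`|v_k| ≤ C·A^k·Γ(1+sk)` for some `C, A > 0`. -/
noncomputable def GevreyS (s : ℝ) : Set (PowerSeries ℂ) :=
  {u | ∃ C A : ℝ, 0 < C ∧ 0 < A ∧
    ∀ n : ℕ, ‖PowerSeries.coeff (R := ℂ) n u‖ ≤ C * A ^ n * Real.Gamma (1 + s * n)}

/-- `ℂ{z}`: power series with positive radius of convergence, i.e. with geometrically
bounded coefficients. -/
noncomputable def Cz : Set (PowerSeries ℂ) :=
  {u | ∃ C A : ℝ, 0 < C ∧ 0 < A ∧ ∀ n : ℕ, ‖PowerSeries.coeff (R := ℂ) n u‖ ≤ C * A ^ n}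

/-- `G_s[[t]]`: elements of `ℂ[[t,z]]` all of whose `t`-coefficients lie in `ℂ[[z]]_s`. -/
noncomputable def Gst (s : ℝ) : Set PS2 :=
  {u | ∀ n : ℕ, PowerSeries.coeff (R := PowerSeries ℂ) n u ∈ GevreyS s}

/-- `𝒪[[t]]`: elements of `ℂ[[t,z]]` all of whose `t`-coefficients lie in `ℂ{z}`. -/
noncomputable def Ot : Set PS2 :=
  {u | ∀ n : ℕ, PowerSeries.coeff (R := PowerSeries ℂ) n u ∈ Cz}

section AuxLemmas

open Finset

local notation "cf" => PowerSeries.coeff (R := PowerSeries ℂ)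

lemma Cz_zero : (0 : PowerSeries ℂ) ∈ Cz := ⟨1, 1, one_pos, one_pos, by simp [Cz]⟩

lemma Cz_add {u v : PowerSeries ℂ} (hu : u ∈ Cz) (hv : v ∈ Cz) : u + v ∈ Cz := by
  obtain ⟨C1, A1, hC1, hA1, h1⟩ := hu
  obtain ⟨C2, A2, hC2, hA2, h2⟩ := hv
  refine ⟨C1 + C2, max A1 A2, by positivity, lt_of_lt_of_le hA1 (le_max_left _ _), fun n => ?_⟩
  calc ‖PowerSeries.coeff (R := ℂ) n (u + v)‖
      ≤ ‖PowerSeries.coeff (R := ℂ) n u‖ + ‖PowerSeries.coeff (R := ℂ) n v‖ := by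
        rw [map_add]; exact norm_add_le _ _
    _ ≤ C1 * A1 ^ n + C2 * A2 ^ n := add_le_add (h1 n) (h2 n)
    _ ≤ C1 * (max A1 A2) ^ n + C2 * (max A1 A2) ^ n := by
        gcongr <;> [exact le_max_left _ _; exact le_max_right _ _]
    _ = (C1 + C2) * (max A1 A2) ^ n := by ring

lemma Cz_smul (c : ℂ) {u : PowerSeries ℂ} (hu : u ∈ Cz) : c • u ∈ Cz := by
  obtain ⟨C, A, hC, hA, h⟩ := hu
  refine ⟨(‖c‖ + 1) * C, A, by positivity, hA, fun n => ?_⟩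
  rw [map_smul, smul_eq_mul, norm_mul]
  calc ‖c‖ * ‖PowerSeries.coeff (R := ℂ) n u‖ ≤ (‖c‖ + 1) * (C * A ^ n) := by
        apply mul_le_mul (by linarith [norm_nonneg c]) (h n) (norm_nonneg _) (by positivity)
    _ = (‖c‖ + 1) * C * A ^ n := by ring

lemma Cz_neg {u : PowerSeries ℂ} (hu : u ∈ Cz) : -u ∈ Cz := by
  simpa using Cz_smul (-1 : ℂ) hu

lemma Cz_sub {u v : PowerSeries ℂ} (hu : u ∈ Cz) (hv : v ∈ Cz) : u - v ∈ Cz := by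
  rw [sub_eq_add_neg]; exact Cz_add hu (Cz_neg hv)

lemma Cz_sum {ι : Type*} {s : Finset ι} {f : ι → PowerSeries ℂ} (h : ∀ i ∈ s, f i ∈ Cz) :
    (∑ i ∈ s, f i) ∈ Cz :=
  Finset.sum_induction f (· ∈ Cz) (fun _ _ ha hb => Cz_add ha hb) Cz_zero h

lemma Cz_mul {u v : PowerSeries ℂ} (hu : u ∈ Cz) (hv : v ∈ Cz) : u * v ∈ Cz := by
  obtain ⟨C1, A1, hC1, hA1, h1⟩ := hu
  obtain ⟨C2, A2, hC2, hA2, h2⟩ := hv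
  set A := max A1 A2 with hA
  have hApos : 0 < A := lt_of_lt_of_le hA1 (le_max_left _ _)
  refine ⟨C1 * C2, 2 * A, by positivity, by positivity, fun n => ?_⟩
  rw [PowerSeries.coeff_mul]
  calc ‖∑ p ∈ antidiagonal n, PowerSeries.coeff (R := ℂ) p.1 u * PowerSeries.coeff (R := ℂ) p.2 v‖
      ≤ ∑ p ∈ antidiagonal n, ‖PowerSeries.coeff (R := ℂ) p.1 u * PowerSeries.coeff (R := ℂ) p.2 v‖ :=
        norm_sum_le _ _
    _ ≤ ∑ _p ∈ antidiagonal n, C1 * C2 * A ^ n := by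
        apply Finset.sum_le_sum
        intro p hp
        have hpn : p.1 + p.2 = n := Finset.HasAntidiagonal.mem_antidiagonal.mp hp
        rw [norm_mul]
        calc ‖PowerSeries.coeff (R := ℂ) p.1 u‖ * ‖PowerSeries.coeff (R := ℂ) p.2 v‖
            ≤ (C1 * A1 ^ p.1) * (C2 * A2 ^ p.2) :=
              mul_le_mul (h1 p.1) (h2 p.2) (norm_nonneg _) (by positivity)
          _ ≤ (C1 * A ^ p.1) * (C2 * A ^ p.2) := by
              gcongr <;> [exact le_max_left _ _; exact le_max_right _ _]
          _ = C1 * C2 * A ^ n := by rw [← hpn, pow_add]; ring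
    _ = (n + 1 : ℝ) * (C1 * C2 * A ^ n) := by
        rw [Finset.sum_const, Finset.Nat.card_antidiagonal]; push_cast; ring
    _ ≤ 2 ^ n * (C1 * C2 * A ^ n) := by
        have h2 : (n + 1 : ℝ) ≤ 2 ^ n := by
          have := Nat.lt_two_pow_self (n := n); exact_mod_cast this
        have h3 : (0:ℝ) ≤ C1 * C2 * A ^ n := by positivity
        exact mul_le_mul_of_nonneg_right h2 h3
    _ = C1 * C2 * (2 * A) ^ n := by rw [mul_pow]; ring

lemma coeff_dz (u : PowerSeries ℂ) (n : ℕ) :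
    PowerSeries.coeff (R := ℂ) n (dz u) = ((n : ℂ) + 1) * PowerSeries.coeff (R := ℂ) (n + 1) u := by
  simp [dz]

lemma Cz_dz {u : PowerSeries ℂ} (hu : u ∈ Cz) : dz u ∈ Cz := by
  obtain ⟨C, A, hC, hA, h⟩ := hu
  refine ⟨C * A, 2 * A, by positivity, by positivity, fun n => ?_⟩
  rw [coeff_dz, norm_mul]
  have hn : ‖((n : ℂ) + 1)‖ = (n : ℝ) + 1 := by
    rw [show ((n : ℂ) + 1) = ((n+1 : ℕ) : ℂ) by push_cast; ring, Complex.norm_natCast]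
    push_cast; ring
  rw [hn]
  calc ((n : ℝ) + 1) * ‖PowerSeries.coeff (R := ℂ) (n+1) u‖ ≤ 2 ^ n * (C * A ^ (n+1)) := by
        apply mul_le_mul _ (h (n+1)) (norm_nonneg _) (by positivity)
        have h2 := Nat.lt_two_pow_self (n := n)
        exact_mod_cast h2
    _ = C * A * (2 * A) ^ n := by rw [mul_pow, pow_succ]; ring

lemma Cz_dz_pow (r : ℕ) {u : PowerSeries ℂ} (hu : u ∈ Cz) : (dz ^ r) u ∈ Cz := by
  induction r generalizing u with
  | zero => simpa using hu
  | succ r ih =>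
    rw [pow_succ, Module.End.mul_apply]
    exact ih (Cz_dz hu)

lemma Cz_of_mul_eq_one {v w : PowerSeries ℂ} (hv : v ∈ Cz)
    (h0 : PowerSeries.coeff (R := ℂ) 0 v ≠ 0) (h : v * w = 1) : w ∈ Cz := by
  obtain ⟨C, A, hC, hA, hb⟩ := hv
  set c : ℝ := ‖PowerSeries.coeff (R := ℂ) 0 v‖ with hcdef
  have hc : 0 < c := norm_pos_iff.mpr h0
  set D : ℝ := ‖PowerSeries.coeff (R := ℂ) 0 w‖ + 1 with hDdef
  have hD : 0 < D := by positivity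
  set B : ℝ := A * (1 + C / c) with hBdef
  have hB : 0 < B := by positivity
  have hAB : A < B := by
    rw [hBdef]
    nlinarith [div_pos hC hc]
  have hq1 : A / B < 1 := (div_lt_one hB).mpr hAB
  have hq0 : 0 < A / B := div_pos hA hB
  have h1q : 0 < 1 - A / B := by linarith
  have main : ∀ n, ‖PowerSeries.coeff (R := ℂ) n w‖ ≤ D * B ^ n := by
    intro n
    induction n using Nat.strong_induction_on with
    | _ n ih =>
      match n with
      | 0 => simp [hDdef]
      | (k+1) =>
        have hco : PowerSeries.coeff (R := ℂ) (k+1) (v * w) = 0 := by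
          rw [h, PowerSeries.coeff_one]; simp
        rw [PowerSeries.coeff_mul,
          Finset.Nat.sum_antidiagonal_eq_sum_range_succ_mk, Finset.sum_range_succ'] at hco
        simp only [Nat.sub_zero] at hco
        have hrec : PowerSeries.coeff (R := ℂ) 0 v * PowerSeries.coeff (R := ℂ) (k+1) w =
            -∑ i ∈ range (k+1), PowerSeries.coeff (R := ℂ) (i+1) v *
              PowerSeries.coeff (R := ℂ) (k+1-(i+1)) w := by
          linear_combination hco
        have hnorm : c * ‖PowerSeries.coeff (R := ℂ) (k+1) w‖ ≤
            ∑ i ∈ range (k+1), (C * A ^ (i+1)) * (D * B ^ (k-i)) := by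
          rw [hcdef, ← norm_mul, hrec, norm_neg]
          refine (norm_sum_le _ _).trans (Finset.sum_le_sum fun i hi => ?_)
          rw [norm_mul]
          have hik : i < k + 1 := Finset.mem_range.mp hi
          have hidx : k + 1 - (i+1) = k - i := by omega
          rw [hidx]
          exact mul_le_mul (hb (i+1)) (ih (k-i) (by omega)) (norm_nonneg _) (by positivity)
        have hsum : ∑ i ∈ range (k+1), (C * A ^ (i+1)) * (D * B ^ (k-i)) ≤ c * (D * B ^ (k+1)) := by
          have hterm : ∀ i ∈ range (k+1),
              (C * A ^ (i+1)) * (D * B ^ (k-i)) = (C * A * D * B ^ k) * (A / B) ^ i := by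
            intro i hi
            have hik : i ≤ k := by have := Finset.mem_range.mp hi; omega
            have hBk : B ^ k = B ^ i * B ^ (k - i) := by
              rw [← pow_add, Nat.add_sub_cancel' hik]
            rw [div_pow, hBk]
            field_simp
            ring
          rw [Finset.sum_congr rfl hterm, ← Finset.mul_sum]
          have hgeom : ∑ i ∈ range (k+1), (A / B) ^ i ≤ 1 / (1 - A / B) := by
            rw [le_div_iff₀ h1q]
            have := geom_sum_mul (A / B) (k+1)
            have hpow : (0:ℝ) ≤ (A/B) ^ (k+1) := by positivity
            nlinarith [this]
          calc (C * A * D * B ^ k) * ∑ i ∈ range (k+1), (A / B) ^ i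
              ≤ (C * A * D * B ^ k) * (1 / (1 - A / B)) := by
                apply mul_le_mul_of_nonneg_left hgeom (by positivity)
            _ = c * (D * B ^ (k+1)) := by
                rw [hBdef]
                have hc' : c ≠ 0 := ne_of_gt hc
                have hA' : A ≠ 0 := ne_of_gt hA
                have hd : 1 - A / (A * (1 + C / c)) = C / (c + C) := by
                  field_simp
                  ring
                rw [hd, pow_succ]
                field_simp
        have : c * ‖PowerSeries.coeff (R := ℂ) (k+1) w‖ ≤ c * (D * B ^ (k+1)) := hnorm.trans hsum
        exact le_of_mul_le_mul_left this hc
  exact ⟨D, B, hD, hB, main⟩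

-- PS2 coefficient lemmas

lemma coeff_dt (u : PS2) (n : ℕ) :
    cf n (dt u) = ((n : ℂ) + 1) • cf (n+1) u := by
  simp [dt]

lemma coeff_dzc (u : PS2) (n : ℕ) : cf n (dzc u) = dz (cf n u) := by
  simp [dzc]

lemma coeff_dtInv (m : ℕ) (u : PS2) (n : ℕ) :
    cf n (dtInv m u) = if m ≤ n then
      ((((n - m).factorial : ℂ)) / (n.factorial : ℂ)) • cf (n - m) u else 0 := by
  simp [dtInv]

lemma coeff_dt_pow (j : ℕ) (u : PS2) (n : ℕ) :
    cf n ((dt ^ j) u) = (((n+j).descFactorial j : ℂ)) • cf (n+j) u := by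
  induction j generalizing u n with
  | zero => simp
  | succ j ih =>
    rw [pow_succ', Module.End.mul_apply, coeff_dt, ih, smul_smul]
    have hidx : n + 1 + j = n + (j + 1) := by omega
    rw [hidx]
    congr 1
    rw [Nat.descFactorial_succ]
    have : n + (j+1) - j = n + 1 := by omega
    rw [this]
    push_cast
    ring

lemma coeff_dzc_pow (r : ℕ) (u : PS2) (n : ℕ) :
    cf n ((dzc ^ r) u) = (dz ^ r) (cf n u) := by
  induction r generalizing u with
  | zero => simp
  | succ r ih =>
    rw [pow_succ, Module.End.mul_apply, pow_succ, Module.End.mul_apply, ih, coeff_dzc]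

lemma dt_pow_dtInv (m : ℕ) (u : PS2) : (dt ^ m) (dtInv m u) = u := by
  ext n
  rw [coeff_dt_pow, coeff_dtInv, if_pos (Nat.le_add_left m n), Nat.add_sub_cancel, smul_smul]
  have hfac : ((n + m).descFactorial m : ℂ) * ((n.factorial : ℂ) / ((n+m).factorial : ℂ)) = 1 := by
    have hkey : (n.factorial) * ((n+m).descFactorial m) = (n+m).factorial := by
      have := Nat.factorial_mul_descFactorial (Nat.le_add_left m n)
      rwa [Nat.add_sub_cancel] at this
    have hne : ((n+m).factorial : ℂ) ≠ 0 := by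
      exact_mod_cast Nat.cast_ne_zero.mpr (Nat.factorial_ne_zero _)
    field_simp
    exact_mod_cast (mul_comm ((n+m).descFactorial m) (n.factorial) ▸ hkey)
  rw [hfac, one_smul]

lemma coeff_lt_ordT {g : PS2} {n : ℕ} (h : n < ordT g) : cf n g = 0 := by
  by_contra hne
  exact absurd (Nat.sInf_le hne) (not_le.mpr h)

lemma POp_apply (Λ : Finset (ℕ × ℕ)) (a : ℕ × ℕ → PS2) (m : ℕ) (u : PS2) :
    POp Λ a m u = ∑ p ∈ Λ, a p * (dt ^ p.1) ((dzc ^ p.2) (dtInv m u)) := by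
  simp [POp, LinearMap.sum_apply, LinearMap.comp_apply, LinearMap.mulLeft_apply]

lemma coeff_mul_term {b : PS2} {j r m n : ℕ} (u : PS2) (hj : j < m + ordT b)
    (hu : ∀ k < n, cf k u = 0) :
    cf n (b * (dt ^ j) ((dzc ^ r) (dtInv m u))) = 0 := by
  rw [PowerSeries.coeff_mul]
  apply Finset.sum_eq_zero
  intro x hx
  rcases lt_or_ge x.1 (ordT b) with hlt | hge
  · rw [coeff_lt_ordT hlt, zero_mul]
  · have hxn : x.1 + x.2 = n := Finset.HasAntidiagonal.mem_antidiagonal.mp hx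
    rw [coeff_dt_pow, coeff_dzc_pow, coeff_dtInv]
    split
    · next hle =>
      rw [hu (x.2 + j - m) (by omega)]
      simp
    · simp

lemma coeff_vertex {b : PS2} {n : ℕ} (u : PS2) (hu : ∀ k < n, cf k u = 0) :
    cf n (b * u) = cf 0 b * cf n u := by
  rw [PowerSeries.coeff_mul]
  apply Finset.sum_eq_single_of_mem (0, n) (by simp)
  rintro ⟨i, k⟩ hx hne
  have hik : i + k = n := Finset.HasAntidiagonal.mem_antidiagonal.mp hx
  have hi : i ≠ 0 := by
    rintro rfl
    simp only [Nat.zero_add] at hik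
    subst hik
    exact hne rfl
  rw [hu k (by omega), mul_zero]

noncomputable def solSeq (F : PS2 →ₗ[ℂ] PS2) (B : PowerSeries ℂ) (f : PS2) : ℕ → PowerSeries ℂ
  | n =>
    B * (PowerSeries.coeff (R := PowerSeries ℂ) n f -
      PowerSeries.coeff (R := PowerSeries ℂ) n
        (F (PowerSeries.mk fun k => if h : k < n then solSeq F B f k else 0)))
  termination_by n => n
  decreasing_by exact h

end AuxLemmas



section OtLemmas

open Finset

local notation "cf" => PowerSeries.coeff (R := PowerSeries ℂ)

lemma mem_Ot {u : PS2} : u ∈ Ot ↔ ∀ n, cf n u ∈ Cz := by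
  simp only [Ot, Set.mem_setOf_eq]

lemma Ot_dtInv (m : ℕ) {u : PS2} (hu : u ∈ Ot) : dtInv m u ∈ Ot := by
  rw [mem_Ot]
  intro n
  rw [coeff_dtInv]
  split
  · exact Cz_smul _ (mem_Ot.mp hu _)
  · exact Cz_zero

lemma Ot_dt_pow (j : ℕ) {u : PS2} (hu : u ∈ Ot) : (dt ^ j) u ∈ Ot := by
  rw [mem_Ot]
  intro n
  rw [coeff_dt_pow]
  exact Cz_smul _ (mem_Ot.mp hu _)

lemma Ot_dzc_pow (r : ℕ) {u : PS2} (hu : u ∈ Ot) : (dzc ^ r) u ∈ Ot := by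
  rw [mem_Ot]
  intro n
  rw [coeff_dzc_pow]
  exact Cz_dz_pow r (mem_Ot.mp hu _)

lemma Ot_mul {b u : PS2} (hb : ∀ n, cf n b ∈ Cz) (hu : u ∈ Ot) : b * u ∈ Ot := by
  rw [mem_Ot]
  intro n
  rw [PowerSeries.coeff_mul]
  exact Cz_sum fun p _ => Cz_mul (hb _) (mem_Ot.mp hu _)

end OtLemmas


/-- Corollary (vertex case): if each `a_{j,r,n} ∈ ℂ{z}`, `Λ_m = {(m,0)}` with
`ord_t(a_{m,0}) = 0` (so the principal part of `P(∂_t,∂_z)` is `a_{m,0,0}(z)·∂_t^m`), and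
the non-resonance condition `a_{m,0,0}(0) ≠ 0` holds, then `P(∂_t,∂_z)∂_t^{−m}` is a
bijective `ℂ`-linear map of `ℂ[[t,z]]` onto itself restricting to a bijection of `𝒪[[t]]`
onto itself. -/
theorem statement15 (Λ : Finset (ℕ × ℕ)) (hΛ : Λ.Nonempty) (a : ℕ × ℕ → PS2)
    (ha : ∀ p ∈ Λ, a p ≠ 0)
    (hconv : ∀ p ∈ Λ, ∀ n : ℕ, PowerSeries.coeff (R := PowerSeries ℂ) n (a p) ∈ Cz)
    (M : ℤ) (hM : M = Λ.sup' hΛ (fun p => (p.1 : ℤ) - (ordT (a p) : ℤ))) (hM0 : 0 ≤ M)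
    (hvertex : Λ.filter (fun p => (p.1 : ℤ) - (ordT (a p) : ℤ) = M) = {(M.toNat, 0)})
    (hord : ordT (a (M.toNat, 0)) = 0)
    (hres : PowerSeries.coeff (R := ℂ) 0
      (PowerSeries.coeff (R := PowerSeries ℂ) 0 (a (M.toNat, 0))) ≠ 0) :
    Function.Bijective (POp Λ a M.toNat) ∧
      Set.BijOn (POp Λ a M.toNat) Ot Ot := by
  have hmem : ((M.toNat, 0) : ℕ × ℕ) ∈ Λ := by
    have h1 : ((M.toNat, 0) : ℕ × ℕ) ∈
        Λ.filter (fun p => (p.1 : ℤ) - (ordT (a p) : ℤ) = M) := by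
      rw [hvertex]; exact Finset.mem_singleton_self _
    exact (Finset.mem_filter.mp h1).1
  set A0 : PowerSeries ℂ := PowerSeries.coeff (R := PowerSeries ℂ) 0 (a (M.toNat, 0)) with hA0
  -- key lemma: if all lower coefficients vanish, POp acts by multiplication by A0
  have key : ∀ (u : PS2) (n : ℕ), (∀ k < n, PowerSeries.coeff (R := PowerSeries ℂ) k u = 0) →
      PowerSeries.coeff (R := PowerSeries ℂ) n (POp Λ a M.toNat u) =
        A0 * PowerSeries.coeff (R := PowerSeries ℂ) n u := by
    intro u n hu
    rw [POp_apply, map_sum]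
    rw [Finset.sum_eq_single_of_mem ((M.toNat, 0) : ℕ × ℕ) hmem ?side]
    · simp only [pow_zero, Module.End.one_apply]
      rw [dt_pow_dtInv]
      exact coeff_vertex u hu
    case side =>
      intro p hp hne
      apply coeff_mul_term u ?_ hu
      have h1 : (p.1 : ℤ) - (ordT (a p) : ℤ) ≤ M := by
        rw [hM]
        exact Finset.le_sup' (fun p => (p.1 : ℤ) - (ordT (a p) : ℤ)) hp
      have h2 : (p.1 : ℤ) - (ordT (a p) : ℤ) ≠ M := by
        intro hEq
        have hpf : p ∈ Λ.filter (fun p => (p.1 : ℤ) - (ordT (a p) : ℤ) = M) :=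
          Finset.mem_filter.mpr ⟨hp, hEq⟩
        rw [hvertex, Finset.mem_singleton] at hpf
        exact hne hpf
      have h3 : (M.toNat : ℤ) = M := Int.toNat_of_nonneg hM0
      omega
  have key2 : ∀ (u v : PS2) (n : ℕ),
      (∀ k < n, PowerSeries.coeff (R := PowerSeries ℂ) k u = PowerSeries.coeff (R := PowerSeries ℂ) k v) →
      PowerSeries.coeff (R := PowerSeries ℂ) n (POp Λ a M.toNat u) =
        PowerSeries.coeff (R := PowerSeries ℂ) n (POp Λ a M.toNat v) +
          A0 * (PowerSeries.coeff (R := PowerSeries ℂ) n u -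
            PowerSeries.coeff (R := PowerSeries ℂ) n v) := by
    intro u v n huv
    have h := key (u - v) n (fun k hk => by rw [map_sub, huv k hk, sub_self])
    rw [map_sub, map_sub, map_sub] at h
    linear_combination h
  have hA0ne : A0 ≠ 0 := fun h => hres (by rw [h, map_zero])
  have hinj : Function.Injective (POp Λ a M.toNat) := by
    intro u v huv
    have hz : POp Λ a M.toNat (u - v) = 0 := by rw [map_sub, huv, sub_self]
    have hzero : ∀ n, PowerSeries.coeff (R := PowerSeries ℂ) n (u - v) = 0 := by
      intro n
      induction n using Nat.strong_induction_on with
      | _ n ih =>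
        have hk := key (u - v) n ih
        rw [hz, map_zero] at hk
        rcases mul_eq_zero.mp hk.symm with h | h
        · exact absurd h hA0ne
        · exact h
    have huv0 : u - v = 0 := PowerSeries.ext fun n => by rw [hzero n, map_zero]
    exact sub_eq_zero.mp huv0
  -- inverse of the leading coefficient
  set B0 : PowerSeries ℂ := PowerSeries.invOfUnit A0 (Units.mk0 _ hres) with hB0
  have hAB : A0 * B0 = 1 := PowerSeries.mul_invOfUnit A0 _ (by
    rw [← PowerSeries.coeff_zero_eq_constantCoeff_apply]; rfl)
  have hB0Cz : B0 ∈ Cz := Cz_of_mul_eq_one (hconv _ hmem 0) hres hAB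
  -- the recursive solution
  have hsol : ∀ f : PS2, POp Λ a M.toNat (PowerSeries.mk (solSeq (POp Λ a M.toNat) B0 f)) = f := by
    intro f
    ext n
    set u := PowerSeries.mk (solSeq (POp Λ a M.toNat) B0 f) with hu
    set v := PowerSeries.mk (fun k =>
      if h : k < n then solSeq (POp Λ a M.toNat) B0 f k else 0) with hv
    have hagree : ∀ k < n, PowerSeries.coeff (R := PowerSeries ℂ) k u =
        PowerSeries.coeff (R := PowerSeries ℂ) k v := by
      intro k hk
      rw [hu, hv, PowerSeries.coeff_mk, PowerSeries.coeff_mk, dif_pos hk]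
    have h2 := key2 u v n hagree
    have hvn : PowerSeries.coeff (R := PowerSeries ℂ) n v = 0 := by
      rw [hv, PowerSeries.coeff_mk, dif_neg (lt_irrefl n)]
    have hun : PowerSeries.coeff (R := PowerSeries ℂ) n u =
        B0 * (PowerSeries.coeff (R := PowerSeries ℂ) n f -
          PowerSeries.coeff (R := PowerSeries ℂ) n (POp Λ a M.toNat v)) := by
      rw [hu, PowerSeries.coeff_mk, solSeq, ← hv]
    rw [h2, hun, hvn, sub_zero, ← mul_assoc, hAB, one_mul]
    ring
  have hsurj : Function.Surjective (POp Λ a M.toNat) := fun f =>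
    ⟨PowerSeries.mk (solSeq (POp Λ a M.toNat) B0 f), hsol f⟩
  -- maps Ot to Ot
  have hmaps : ∀ u ∈ Ot, POp Λ a M.toNat u ∈ Ot := by
    intro u hu
    rw [mem_Ot]
    intro n
    rw [POp_apply, map_sum]
    exact Cz_sum fun p hp =>
      mem_Ot.mp (Ot_mul (hconv p hp) (Ot_dt_pow _ (Ot_dzc_pow _ (Ot_dtInv _ hu)))) n
  -- the solution is in Ot when f is
  have hOtsol : ∀ f ∈ Ot, PowerSeries.mk (solSeq (POp Λ a M.toNat) B0 f) ∈ Ot := by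
    intro f hf
    rw [mem_Ot]
    intro n
    rw [PowerSeries.coeff_mk]
    induction n using Nat.strong_induction_on with
    | _ n ih =>
      rw [solSeq]
      refine Cz_mul hB0Cz (Cz_sub (mem_Ot.mp hf n) ?_)
      have hvOt : PowerSeries.mk (fun k =>
          if h : k < n then solSeq (POp Λ a M.toNat) B0 f k else 0) ∈ Ot := by
        rw [mem_Ot]
        intro k
        rw [PowerSeries.coeff_mk]
        split
        · exact ih k (by assumption)
        · exact Cz_zero
      exact mem_Ot.mp (hmaps _ hvOt) n
  refine ⟨⟨hinj, hsurj⟩, hmaps, fun x _ y _ h => hinj h, fun f hf =>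
    ⟨PowerSeries.mk (solSeq (POp Λ a M.toNat) B0 f), hOtsol f hf, hsol f⟩⟩
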